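/- Let k be an algebraically closed field, let M := ℤ^n (for some n ≥ 1, written additively), and let S be a finitely generated submonoid of M that generates M as a group. In the monoid algebra k[M] (the algebra of finitely supported functions M → k with convolution product), let A := {f ∈ k[M] : supp(f) ⊆ S}, which is a k-subalgebra (the image of k[S]). Then A is seminormal in k[M] — i.e. every f ∈ k[M] with f² ∈ A and f³ ∈ A lies in A — if and only if S is semisaturated in M. -/

import Mathlib

open scoped Pointwise
open scoped Classical

namespace SemiSatAux

variable {n : ℕ}


variable {n : ℕ}

def dotQ (y x : Fin n → ℚ) : ℚ := ∑ i, y i * x i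

lemma dotQ_add_right (y a b : Fin n → ℚ) : dotQ y (a + b) = dotQ y a + dotQ y b := by
  simp [dotQ, mul_add, Finset.sum_add_distrib]

lemma dotQ_sub_right (y a b : Fin n → ℚ) : dotQ y (a - b) = dotQ y a - dotQ y b := by
  simp [dotQ, mul_sub, Finset.sum_sub_distrib]

lemma dotQ_add_left (y z x : Fin n → ℚ) : dotQ (y + z) x = dotQ y x + dotQ z x := by
  simp [dotQ, add_mul, Finset.sum_add_distrib]

lemma dotQ_neg_left (y x : Fin n → ℚ) : dotQ (-y) x = - dotQ y x := by
  simp [dotQ]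

lemma dotQ_smul_right (y x : Fin n → ℚ) (c : ℚ) : dotQ y (c • x) = c * dotQ y x := by
  unfold dotQ; rw [Finset.mul_sum]; exact Finset.sum_congr rfl fun i _ => by
    simp [Pi.smul_apply]; ring

lemma dotQ_sub_smul_left (z y x : Fin n → ℚ) (c : ℚ) :
    dotQ (z - c • y) x = dotQ z x - c * dotQ y x := by
  unfold dotQ; rw [Finset.mul_sum, ← Finset.sum_sub_distrib]
  exact Finset.sum_congr rfl fun i _ => by simp [Pi.smul_apply]; ring

lemma dotQ_sum_left {ι : Type*} (s : Finset ι) (y : ι → Fin n → ℚ) (x : Fin n → ℚ) :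
    dotQ (∑ i ∈ s, y i) x = ∑ i ∈ s, dotQ (y i) x := by
  classical
  induction s using Finset.induction with
  | empty => simp [dotQ]
  | insert _ _ h ih => rw [Finset.sum_insert h, Finset.sum_insert h, dotQ_add_left, ih]

lemma dotQ_sum_right {ι : Type*} (s : Finset ι) (y : Fin n → ℚ) (x : ι → Fin n → ℚ) :
    dotQ y (∑ i ∈ s, x i) = ∑ i ∈ s, dotQ y (x i) := by
  classical
  induction s using Finset.induction with
  | empty => simp [dotQ]
  | insert _ _ h ih => rw [Finset.sum_insert h, Finset.sum_insert h, dotQ_add_right, ih]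

lemma dotQ_zero_left (x : Fin n → ℚ) : dotQ 0 x = 0 := by simp [dotQ]

/-- Farkas' lemma for finitely generated cones over ℚ. -/
lemma farkas : ∀ (r : ℕ) (w : Fin r → (Fin n → ℚ)) (x : Fin n → ℚ),
    (∃ c : Fin r → ℚ, (∀ i, 0 ≤ c i) ∧ x = ∑ i, c i • w i) ∨
    (∃ y : Fin n → ℚ, (∀ i, 0 ≤ dotQ y (w i)) ∧ dotQ y x < 0) := by
  intro r
  induction r with
  | zero =>
    intro w x
    by_cases hx : x = 0
    · exact Or.inl ⟨0, fun i => le_rfl, by simp [hx]⟩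
    · have : ∃ j, x j ≠ 0 := by
        by_contra h; push_neg at h; exact hx (funext h)
      obtain ⟨j, hj⟩ := this
      refine Or.inr ⟨fun i => if i = j then -x j else 0, fun i => i.elim0, ?_⟩
      have : dotQ (fun i => if i = j then -x j else 0) x = -x j * x j := by
        simp [dotQ]
      rw [this]
      have := mul_self_pos.mpr hj
      nlinarith
  | succ r ih =>
    intro w x
    set v := w (Fin.last r) with hv
    set w0 : Fin r → (Fin n → ℚ) := fun i => w i.castSucc with hw0
    rcases ih w0 x with ⟨c, hc, hx⟩ | ⟨y, hy, hyx⟩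
    · refine Or.inl ⟨Fin.snoc c 0, ?_, ?_⟩
      · intro i
        refine Fin.lastCases ?_ ?_ i
        · simp
        · intro j; simpa using hc j
      · rw [Fin.sum_univ_castSucc]
        simp [Fin.snoc, hx, hw0]
    · by_cases hyv : 0 ≤ dotQ y v
      · refine Or.inr ⟨y, ?_, hyx⟩
        intro i
        refine Fin.lastCases ?_ ?_ i
        · exact hyv
        · intro j; exact hy j
      · push_neg at hyv
        have hdv : dotQ y v ≠ 0 := ne_of_lt hyv
        set π : (Fin n → ℚ) → (Fin n → ℚ) := fun t => t - (dotQ y t / dotQ y v) • v with hπ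
        have hπdot : ∀ (z t : Fin n → ℚ),
            dotQ z (π t) = dotQ z t - (dotQ y t / dotQ y v) * dotQ z v := by
          intro z t
          rw [hπ]; simp only
          rw [dotQ_sub_right, dotQ_smul_right]
        rcases ih (fun i => π (w0 i)) (π x) with ⟨c, hc, hx'⟩ | ⟨z, hz, hzx⟩
        · left
          set μ : ℚ := dotQ y x / dotQ y v - ∑ i, c i * (dotQ y (w0 i) / dotQ y v) with hμ
          have hterm : ∀ i : Fin r, c i • π (w0 i) =
              c i • w0 i - (c i * (dotQ y (w0 i) / dotQ y v)) • v := by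
            intro i
            show c i • (w0 i - (dotQ y (w0 i) / dotQ y v) • v) = _
            rw [smul_sub, smul_smul]
          have hsum : (∑ i, c i • π (w0 i)) =
              (∑ i, c i • w0 i) - (∑ i, c i * (dotQ y (w0 i) / dotQ y v)) • v := by
            rw [Finset.sum_congr rfl (fun i _ => hterm i), Finset.sum_sub_distrib,
              Finset.sum_smul]
          have hxeq : x = (∑ i, c i • w0 i) + μ • v := by
            have h2 : x = π x + (dotQ y x / dotQ y v) • v := by
              show x = (x - (dotQ y x / dotQ y v) • v) + _
              abel
            rw [h2, hx', hsum, hμ, sub_smul]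
            abel
          have hμpos : 0 ≤ μ := by
            have h1 : 0 < dotQ y x / dotQ y v := div_pos_of_neg_of_neg hyx hyv
            have h2 : (∑ i, c i * (dotQ y (w0 i) / dotQ y v)) ≤ 0 := by
              apply Finset.sum_nonpos
              intro i _
              have : dotQ y (w0 i) / dotQ y v ≤ 0 :=
                div_nonpos_of_nonneg_of_nonpos (hy i) (le_of_lt hyv)
              exact mul_nonpos_of_nonneg_of_nonpos (hc i) this
            rw [hμ]; linarith
          refine ⟨Fin.snoc c μ, ?_, ?_⟩
          · intro i
            refine Fin.lastCases ?_ ?_ i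
            · simpa using hμpos
            · intro j; simpa using hc j
          · rw [Fin.sum_univ_castSucc]
            simp only [Fin.snoc_castSucc, Fin.snoc_last]
            exact hxeq
        · right
          refine ⟨z - (dotQ z v / dotQ y v) • y, ?_, ?_⟩
          · intro i
            refine Fin.lastCases ?_ ?_ i
            · rw [dotQ_sub_smul_left]
              rw [div_mul_cancel₀ _ hdv]
              simp [hv]
            · intro j
              have h := hz j
              rw [hπdot] at h
              rw [dotQ_sub_smul_left]
              have : dotQ z v / dotQ y v * dotQ y (w0 j)
                  = dotQ y (w0 j) / dotQ y v * dotQ z v := by ring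
              rw [this]; exact h
          · rw [dotQ_sub_smul_left]
            rw [hπdot] at hzx
            have : dotQ z v / dotQ y v * dotQ y x = dotQ y x / dotQ y v * dotQ z v := by ring
            rw [this]; exact hzx


lemma exists_nat_mul (q : ℚ) (hq : 0 ≤ q) (N : ℕ) (hdvd : q.den ∣ N) :
    ∃ d : ℕ, (d : ℚ) = N * q := by
  obtain ⟨kk, hk⟩ := hdvd
  refine ⟨q.num.toNat * kk, ?_⟩
  have hnum : (0:ℤ) ≤ q.num := Rat.num_nonneg.mpr hq
  have hq' : (q.den : ℚ) * q = q.num := by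
    rw [mul_comm]; exact_mod_cast Rat.mul_den_eq_num q
  have h2 : ((q.num.toNat : ℕ) : ℚ) = (q.num : ℚ) := by exact_mod_cast Int.toNat_of_nonneg hnum
  rw [hk]
  push_cast [h2]
  linear_combination (-(kk:ℚ)) * hq'

lemma clear_denoms {m' : ℕ} (c : Fin m' → ℚ) (hc : ∀ i, 0 ≤ c i) :
    ∃ (N : ℕ) (d : Fin m' → ℕ), 0 < N ∧ ∀ i, (d i : ℚ) = N * c i := by
  classical
  set N : ℕ := ∏ i, (c i).den with hN
  have hNpos : 0 < N := Finset.prod_pos (fun i _ => (c i).pos)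
  have hint : ∀ i, ∃ d : ℕ, ((d : ℚ)) = (N : ℚ) * c i := fun i =>
    exists_nat_mul (c i) (hc i) N (Finset.dvd_prod_of_mem (fun j => (c j).den)
      (Finset.mem_univ i))
  choose d hd using hint
  exact ⟨N, d, hNpos, hd⟩

lemma dotQ_neg_right (y x : Fin n → ℚ) : dotQ y (-x) = - dotQ y x := by
  simp [dotQ, mul_neg]

def ι (v : Fin n → ℤ) : Fin n → ℚ := fun i => (v i : ℚ)

lemma ι_add (a b : Fin n → ℤ) : ι (a + b) = ι a + ι b := by funext i; simp [ι]

lemma ι_zero : ι (0 : Fin n → ℤ) = 0 := by funext i; simp [ι]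

lemma ι_nsmul (c : ℕ) (a : Fin n → ℤ) : ι (c • a) = (c : ℚ) • ι a := by
  funext i; simp [ι]

lemma ι_inj {a b : Fin n → ℤ} (h : ι a = ι b) : a = b := by
  funext i
  have := congrFun h i
  simp [ι] at this
  exact_mod_cast this

def ιhom : (Fin n → ℤ) →+ (Fin n → ℚ) :=
  { toFun := ι, map_zero' := ι_zero, map_add' := ι_add }

lemma ι_sum {m : ℕ} (c : Fin m → ℕ) (e : Fin m → (Fin n → ℤ)) :
    ι (∑ i, c i • e i) = ∑ i, (c i : ℚ) • ι (e i) := by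
  rw [show ι (∑ i, c i • e i) = ιhom (∑ i, c i • e i) from rfl, map_sum]
  exact Finset.sum_congr rfl fun i _ => ι_nsmul _ _

/-- the additive functional on ℤ^n given by a rational vector -/
def φ (y : Fin n → ℚ) : (Fin n → ℤ) →+ ℚ where
  toFun v := dotQ y (ι v)
  map_zero' := by simp [ι_zero, dotQ]
  map_add' a b := by
    show dotQ y (ι (a + b)) = dotQ y (ι a) + dotQ y (ι b)
    rw [ι_add]; simp [dotQ, mul_add, Finset.sum_add_distrib]

lemma φ_apply (y : Fin n → ℚ) (v : Fin n → ℤ) : φ y v = dotQ y (ι v) := rfl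

lemma φ_neg (y : Fin n → ℚ) (v : Fin n → ℤ) : φ (-y) v = - φ y v := by
  rw [φ_apply, φ_apply, dotQ_neg_left]

lemma φ_zero (v : Fin n → ℤ) : φ (0 : Fin n → ℚ) v = 0 := by
  rw [φ_apply, dotQ_zero_left]

lemma φ_nsmul (y : Fin n → ℚ) (c : ℕ) (a : Fin n → ℤ) :
    φ y (c • a) = (c : ℚ) * φ y a := by
  rw [AddMonoidHom.map_nsmul]; simp [nsmul_eq_mul]

lemma φ_sum {m : ℕ} (y : Fin n → ℚ) (c : Fin m → ℕ) (e : Fin m → (Fin n → ℤ)) :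
    φ y (∑ i, c i • e i) = ∑ i, (c i : ℚ) * φ y (e i) := by
  rw [map_sum]
  exact Finset.sum_congr rfl fun i _ => φ_nsmul _ _ _

lemma φ_sum_left {ι' : Type*} (s : Finset ι') (y : ι' → (Fin n → ℚ)) (v : Fin n → ℤ) :
    φ (∑ i ∈ s, y i) v = ∑ i ∈ s, φ (y i) v := by
  rw [φ_apply, dotQ_sum_left]
  rfl

variable {r : ℕ}

/-- cone membership -/
def inCone (e : Fin r → (Fin n → ℤ)) (x : Fin n → ℤ) : Prop :=
  ∃ c : Fin r → ℚ, (∀ i, 0 ≤ c i) ∧ ι x = ∑ i, c i • ι (e i)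

lemma nat_rep_inCone (e : Fin r → (Fin n → ℤ)) {x : Fin n → ℤ} (c : Fin r → ℕ)
    (h : x = ∑ i, c i • e i) : inCone e x := by
  refine ⟨fun i => (c i : ℚ), fun i => by positivity, ?_⟩
  rw [h, ι_sum]

lemma φ_nonneg_of_inCone (e : Fin r → (Fin n → ℤ)) {x : Fin n → ℤ} (h : inCone e x)
    (y : Fin n → ℚ) (hy : ∀ i, 0 ≤ φ y (e i)) : 0 ≤ φ y x := by
  obtain ⟨c, hc, hx⟩ := h
  have heq : φ y x = ∑ i, c i * φ y (e i) := by
    rw [φ_apply, hx, dotQ_sum_right]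
    exact Finset.sum_congr rfl fun i _ => dotQ_smul_right _ _ _
  rw [heq]
  exact Finset.sum_nonneg fun i _ => mul_nonneg (hc i) (hy i)

section Alg
variable {k : Type*} [Field k]

abbrev M (n : ℕ) := Fin n → ℤ


noncomputable def cut (p : M n → Prop) (f : AddMonoidAlgebra k (M n)) :
    AddMonoidAlgebra k (M n) := AddMonoidAlgebra.ofCoeff (Finsupp.filter p f.coeff)

lemma cut_apply (p : M n → Prop) (f : AddMonoidAlgebra k (M n)) (a : M n) :
    (cut p f).coeff a = if p a then f.coeff a else 0 := Finsupp.filter_apply p f.coeff a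

lemma cut_support (p : M n → Prop) (f : AddMonoidAlgebra k (M n)) :
    (cut p f).coeff.support = f.coeff.support.filter p := Finsupp.support_filter _ _

lemma cut_add (p : M n → Prop) (f g : AddMonoidAlgebra k (M n)) :
    cut p (f + g) = cut p f + cut p g := by
  ext a
  rw [AddMonoidAlgebra.coeff_add, Finsupp.add_apply, cut_apply, cut_apply, cut_apply]
  by_cases hp : p a
  · simp only [hp, if_true]; exact Finsupp.add_apply f.coeff g.coeff a
  · simp [hp]

lemma cut_pos_add_neg (p : M n → Prop) (f : AddMonoidAlgebra k (M n)) :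
    cut p f + cut (fun u => ¬ p u) f = f := by
  ext a
  rw [AddMonoidAlgebra.coeff_add, Finsupp.add_apply, cut_apply, cut_apply]
  by_cases hp : p a <;> simp [hp]

lemma mem_cut_support_iff (p : M n → Prop) (f : AddMonoidAlgebra k (M n)) (x : M n) :
    x ∈ (cut p f).coeff.support ↔ x ∈ f.coeff.support ∧ p x := by
  classical
  rw [cut_support, Finset.mem_filter]

lemma mem_cut_support {p : M n → Prop} {f : AddMonoidAlgebra k (M n)} {x : M n}
    (h : x ∈ (cut p f).coeff.support) : x ∈ f.coeff.support ∧ p x := by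
  classical
  rw [cut_support, Finset.mem_filter] at h; exact h

lemma cut_eq_self (p : M n → Prop) (f : AddMonoidAlgebra k (M n))
    (h : ∀ u ∈ f.coeff.support, p u) : cut p f = f := by
  classical
  ext a
  rw [cut_apply]
  by_cases hp : p a
  · simp [hp]
  · simp only [hp, if_false]
    by_cases ha : a ∈ f.coeff.support
    · exact absurd (h a ha) hp
    · exact (Finsupp.notMem_support_iff.mp ha).symm

lemma cut_eq_zero (p : M n → Prop) (f : AddMonoidAlgebra k (M n))
    (h : ∀ u ∈ f.coeff.support, ¬ p u) : cut p f = 0 := by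
  classical
  ext a
  rw [cut_apply]
  by_cases hp : p a
  · simp only [hp, if_true]
    by_cases ha : a ∈ f.coeff.support
    · exact absurd hp (h a ha)
    · simp [Finsupp.notMem_support_iff.mp ha]
  · simp [hp]

lemma cut_mul_self (p : M n → Prop) (a b : AddMonoidAlgebra k (M n))
    (h : ∀ x ∈ a.coeff.support, ∀ y ∈ b.coeff.support, p (x + y)) : cut p (a * b) = a * b := by
  apply cut_eq_self
  intro u hu
  have := AddMonoidAlgebra.support_coeff_mul_subset a b hu
  rw [Finset.mem_add] at this
  obtain ⟨x, hx, y, hy, hxy⟩ := this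
  rw [← hxy]; exact h x hx y hy

lemma cut_mul_zero (p : M n → Prop) (a b : AddMonoidAlgebra k (M n))
    (h : ∀ x ∈ a.coeff.support, ∀ y ∈ b.coeff.support, ¬ p (x + y)) : cut p (a * b) = 0 := by
  apply cut_eq_zero
  intro u hu
  have := AddMonoidAlgebra.support_coeff_mul_subset a b hu
  rw [Finset.mem_add] at this
  obtain ⟨x, hx, y, hy, hxy⟩ := this
  rw [← hxy]; exact h x hx y hy

/-- Lemma A : top component of a product -/
lemma mul_cut_top (ψ : M n →+ ℚ) (f g : AddMonoidAlgebra k (M n)) (d e : ℚ)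
    (hf : ∀ u ∈ f.coeff.support, ψ u ≤ d) (hg : ∀ u ∈ g.coeff.support, ψ u ≤ e) :
    cut (fun u => ψ u = d + e) (f * g) =
      (cut (fun u => ψ u = d) f) * (cut (fun u => ψ u = e) g) := by
  classical
  set p : M n → Prop := fun u => ψ u = d + e with hp
  set f1 : AddMonoidAlgebra k (M n) := cut (fun u => ψ u = d) f with hf1
  set f2 : AddMonoidAlgebra k (M n) := cut (fun u => ¬ ψ u = d) f with hf2
  set g1 : AddMonoidAlgebra k (M n) := cut (fun u => ψ u = e) g with hg1
  set g2 : AddMonoidAlgebra k (M n) := cut (fun u => ¬ ψ u = e) g with hg2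
  have hfd : f = f1 + f2 := (cut_pos_add_neg _ f).symm
  have hgd : g = g1 + g2 := (cut_pos_add_neg _ g).symm
  have hsf1 : ∀ x ∈ f1.coeff.support, ψ x = d := fun x hx => (mem_cut_support hx).2
  have hsf2 : ∀ x ∈ f2.coeff.support, ψ x < d := fun x hx =>
    lt_of_le_of_ne (hf x (mem_cut_support hx).1) (mem_cut_support hx).2
  have hsg1 : ∀ x ∈ g1.coeff.support, ψ x = e := fun x hx => (mem_cut_support hx).2
  have hsg2 : ∀ x ∈ g2.coeff.support, ψ x < e := fun x hx =>
    lt_of_le_of_ne (hg x (mem_cut_support hx).1) (mem_cut_support hx).2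
  have e11 : cut p (f1 * g1) = f1 * g1 := by
    apply cut_mul_self
    intro x hx y hy
    show ψ (x + y) = d + e
    simp only [map_add, hsf1 x hx, hsg1 y hy]
  have e12 : cut p (f1 * g2) = 0 := by
    apply cut_mul_zero
    intro x hx y hy
    show ¬ ψ (x + y) = d + e
    have h1 := hsf1 x hx; have h2 := hsg2 y hy
    rw [map_add]; intro hcon; rw [h1] at hcon; linarith
  have e21 : cut p (f2 * g1) = 0 := by
    apply cut_mul_zero
    intro x hx y hy
    show ¬ ψ (x + y) = d + e
    have h1 := hsf2 x hx; have h2 := hsg1 y hy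
    rw [map_add]; intro hcon; rw [h2] at hcon; linarith
  have e22 : cut p (f2 * g2) = 0 := by
    apply cut_mul_zero
    intro x hx y hy
    show ¬ ψ (x + y) = d + e
    have h1 := hsf2 x hx; have h2 := hsg2 y hy
    rw [map_add]; intro hcon; linarith
  calc cut p (f * g) = cut p ((f1 + f2) * (g1 + g2)) := by rw [← hfd, ← hgd]
    _ = cut p (f1 * g1) + cut p (f1 * g2) + cut p (f2 * g1) + cut p (f2 * g2) := by
        rw [add_mul, mul_add, mul_add, cut_add, cut_add, cut_add]
        abel
    _ = f1 * g1 := by rw [e11, e12, e21, e22]; abel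

/-- Lemma B : coset component of a product with subgroup-supported right factor -/
lemma mul_cut_coset (U : AddSubgroup (M n)) (m : M n) (g h : AddMonoidAlgebra k (M n))
    (hh : ∀ u ∈ h.coeff.support, u ∈ U) :
    cut (fun u => u - m ∈ U) (g * h) = (cut (fun u => u - m ∈ U) g) * h := by
  classical
  set p : M n → Prop := fun u => u - m ∈ U with hp
  set g1 : AddMonoidAlgebra k (M n) := cut p g with hg1
  set g2 : AddMonoidAlgebra k (M n) := cut (fun u => ¬ p u) g with hg2
  have hgd : g = g1 + g2 := (cut_pos_add_neg _ g).symm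
  have e1 : cut p (g1 * h) = g1 * h := by
    apply cut_mul_self
    intro x hx y hy
    show x + y - m ∈ U
    have hx2 : x - m ∈ U := (mem_cut_support hx).2
    have : x + y - m = (x - m) + y := by abel
    rw [this]
    exact U.add_mem hx2 (hh y hy)
  have e2 : cut p (g2 * h) = 0 := by
    apply cut_mul_zero
    intro x hx y hy
    show ¬ (x + y - m ∈ U)
    have hx2 : ¬ (x - m ∈ U) := (mem_cut_support hx).2
    intro hcon
    apply hx2
    have : x - m = (x + y - m) - y := by abel
    rw [this]
    exact U.sub_mem hcon (hh y hy)
  calc cut p (g * h) = cut p ((g1 + g2) * h) := by rw [← hgd]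
    _ = cut p (g1 * h) + cut p (g2 * h) := by rw [add_mul, cut_add]
    _ = g1 * h := by rw [e1, e2, add_zero]


/-- The hard direction: if `S` is semisaturated, the support of any `f` with
`f²`, `f³` supported in `S` is contained in `S`. -/
theorem support_subset_of_semisaturated {r : ℕ} (S : AddSubmonoid (M n))
    (e : Fin r → M n)
    (he : ∀ x : M n, x ∈ S ↔ ∃ c : Fin r → ℕ, x = ∑ i, c i • e i)
    (hss : ∀ x : M n, 2 • x ∈ S → 3 • x ∈ S → x ∈ S)
    (f : AddMonoidAlgebra k (M n))
    (h2 : ∀ u ∈ (f * f).coeff.support, u ∈ S)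
    (h3 : ∀ u ∈ (f * (f * f)).coeff.support, u ∈ S) :
    ∀ m ∈ f.coeff.support, m ∈ S := by
  classical
  have he_e : ∀ i, e i ∈ S := by
    intro i
    rw [he]
    refine ⟨fun j => if j = i then 1 else 0, ?_⟩
    have hterm : ∀ j : Fin r, (if j = i then (1:ℕ) else 0) • e j
        = if j = i then e j else 0 := by
      intro j; by_cases h : j = i <;> simp [h]
    rw [Finset.sum_congr rfl (fun j _ => hterm j), Finset.sum_ite_eq' Finset.univ i e]
    simp
  have hSmem : ∀ x ∈ S, inCone e x := by
    intro x hx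
    obtain ⟨c, hc⟩ := (he x).mp hx
    exact nat_rep_inCone e c hc
  have hφS : ∀ (y : Fin n → ℚ), (∀ i, 0 ≤ φ y (e i)) → ∀ x ∈ S, 0 ≤ φ y x :=
    fun y hy x hx => φ_nonneg_of_inCone e (hSmem x hx) y hy
  -- Step 1 : the support of f lies in the rational cone generated by the e i
  have step1 : ∀ m ∈ f.coeff.support, inCone e m := by
    intro m hm
    rcases farkas r (fun i => ι (e i)) (ι m) with hL | ⟨y, hy, hyx⟩
    · exact hL
    · exfalso
      set ψ := φ (-y) with hψ
      have hψe : ∀ x ∈ S, ψ x ≤ 0 := by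
        intro x hx
        rw [hψ, φ_neg]
        have : 0 ≤ φ y x := hφS y (fun i => hy i) x hx
        linarith
      have hψm : 0 < ψ m := by
        rw [hψ, φ_neg, φ_apply]; linarith
      have hne : (f.coeff.support.image (fun u => ψ u)).Nonempty :=
        ⟨ψ m, Finset.mem_image_of_mem _ hm⟩
      set d := (f.coeff.support.image (fun u => ψ u)).max' hne with hd
      have hdle : ∀ u ∈ f.coeff.support, ψ u ≤ d := fun u hu =>
        Finset.le_max' _ _ (Finset.mem_image_of_mem _ hu)
      have hdpos : 0 < d := lt_of_lt_of_le hψm (hdle m hm)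
      have key := mul_cut_top ψ f f d d hdle hdle
      obtain ⟨u₀, hu₀, hu₀d⟩ : ∃ u₀ ∈ f.coeff.support, ψ u₀ = d := by
        obtain ⟨u₀, hu₀, h⟩ := Finset.mem_image.mp ((f.coeff.support.image (fun u => ψ u)).max'_mem hne)
        exact ⟨u₀, hu₀, h⟩
      have hf1 : cut (fun u => ψ u = d) f ≠ 0 := by
        intro hcon
        have happ := cut_apply (fun u => ψ u = d) f u₀
        rw [hcon] at happ
        simp only [AddMonoidAlgebra.coeff_zero, Finsupp.coe_zero, Pi.zero_apply, hu₀d, if_true] at happ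
        exact (Finsupp.mem_support_iff.mp hu₀) happ.symm
      have hprod : cut (fun u => ψ u = d + d) (f * f) ≠ 0 := by
        rw [key]; exact mul_ne_zero hf1 hf1
      obtain ⟨u, hu⟩ := Finsupp.support_nonempty_iff.mpr (AddMonoidAlgebra.coeff_eq_zero.not.mpr hprod)
      obtain ⟨huff, hud⟩ := mem_cut_support hu
      have h1 : ψ u ≤ 0 := hψe u (h2 u huff)
      rw [hud] at h1
      linarith
  intro m hm
  have hmC : inCone e m := step1 m hm
  -- construct the supporting functional Y
  have hYex : ∀ i : Fin r, ∃ y : Fin n → ℚ,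
      (∀ j, 0 ≤ φ y (e j)) ∧ φ y m = 0 ∧ (¬ (∃ (t : ℕ) (c : Fin r → ℕ), t • m = (∑ j, c j • e j) + e i) → 0 < φ y (e i)) := by
    intro i
    by_cases hPi : (∃ (t : ℕ) (c : Fin r → ℕ), t • m = (∑ j, c j • e j) + e i)
    · exact ⟨0, fun j => le_of_eq (φ_zero _).symm, φ_zero _, fun h => absurd hPi h⟩
    set w : Fin (r+1) → (Fin n → ℚ) := Fin.snoc (fun j => ι (e j)) (-ι m) with hw
    rcases farkas (r+1) w (-ι (e i)) with ⟨c, hc, hsum⟩ | ⟨y, hy, hyx⟩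
    · exfalso
      apply hPi
      rw [Fin.sum_univ_castSucc] at hsum
      simp only [hw, Fin.snoc_castSucc, Fin.snoc_last] at hsum
      rw [smul_neg, ← sub_eq_add_neg] at hsum
      have h2' : c (Fin.last r) • ι m
          = (∑ j : Fin r, c j.castSucc • ι (e j)) + ι (e i) := by
        rw [sub_eq_iff_eq_add.mp hsum.symm]
        abel
      obtain ⟨N, dd, hN, hdd⟩ := clear_denoms c hc
      have h3' : ι (dd (Fin.last r) • m)
          = ι ((∑ j : Fin r, dd j.castSucc • e j) + N • e i) := by
        rw [ι_nsmul, hdd, mul_smul, h2', smul_add, Finset.smul_sum, ι_add, ι_sum, ι_nsmul]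
        congr 1
        exact Finset.sum_congr rfl fun j _ => by rw [smul_smul, ← hdd]
      have hint : dd (Fin.last r) • m = (∑ j : Fin r, dd j.castSucc • e j) + N • e i :=
        ι_inj h3'
      have hNsucc : (N - 1) + 1 = N := Nat.succ_pred_eq_of_pos hN
      have hsplit : ∀ j : Fin r, (dd j.castSucc + if j = i then N - 1 else 0) • e j
          = dd j.castSucc • e j + (if j = i then (N-1) • e j else 0) := by
        intro j; rw [add_nsmul]; congr 1; by_cases h : j = i <;> simp [h]
      refine ⟨dd (Fin.last r), fun j => dd j.castSucc + if j = i then N - 1 else 0, ?_⟩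
      rw [Finset.sum_congr rfl fun j _ => hsplit j, Finset.sum_add_distrib,
        Finset.sum_ite_eq' Finset.univ i (fun j => (N-1) • e j)]
      simp only [Finset.mem_univ, if_true]
      rw [hint, add_assoc]
      congr 1
      have : (N - 1) • e i + e i = ((N-1) + 1) • e i := (succ_nsmul (e i) (N-1)).symm
      rw [this, hNsucc]
    · refine ⟨y, ?_, ?_, ?_⟩
      · intro j
        have hj := hy j.castSucc
        rw [hw] at hj
        simpa [Fin.snoc_castSucc, φ_apply] using hj
      · have hle : φ y m ≤ 0 := by
          have hl := hy (Fin.last r)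
          rw [hw] at hl
          simp only [Fin.snoc_last] at hl
          rw [dotQ_neg_right] at hl
          rw [φ_apply]
          linarith
        have hge : 0 ≤ φ y m := φ_nonneg_of_inCone e hmC y (fun j => by
          have hj := hy j.castSucc
          rw [hw] at hj
          simpa [Fin.snoc_castSucc, φ_apply] using hj)
        exact le_antisymm hle hge
      · intro _
        rw [dotQ_neg_right] at hyx
        rw [φ_apply]; linarith
  choose yv hy1 hy2 hy3 using hYex
  set Y : Fin n → ℚ := ∑ i, yv i with hY
  have hYe : ∀ j, 0 ≤ φ Y (e j) := by
    intro j; rw [hY, φ_sum_left]; exact Finset.sum_nonneg fun i _ => hy1 i j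
  have hYm : φ Y m = 0 := by
    rw [hY, φ_sum_left]; exact Finset.sum_eq_zero fun i _ => hy2 i
  have hYP : ∀ i, φ Y (e i) = 0 → (∃ (t : ℕ) (c : Fin r → ℕ), t • m = (∑ j, c j • e j) + e i) := by
    intro i h0
    by_contra hPi
    have h1 : 0 < φ (yv i) (e i) := hy3 i hPi
    have h2'' : 0 < φ Y (e i) := by
      rw [hY, φ_sum_left]
      exact Finset.sum_pos' (fun j _ => hy1 j i) ⟨i, Finset.mem_univ i, h1⟩
    rw [h0] at h2''
    exact lt_irrefl _ h2''
  -- Step 3 : m lies in the subgroup generated by the face generators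
  set U : AddSubgroup (M n) :=
    AddSubgroup.closure {x : M n | ∃ i, φ Y (e i) = 0 ∧ x = e i} with hU
  have hφY_nonneg_S : ∀ x ∈ S, 0 ≤ φ Y x := hφS Y hYe
  have hfb : ∀ u ∈ f.coeff.support, φ (-Y) u ≤ 0 := by
    intro u hu; rw [φ_neg]
    have := φ_nonneg_of_inCone e (step1 u hu) Y hYe; linarith
  have hffb : ∀ u ∈ (f*f).coeff.support, φ (-Y) u ≤ 0 := by
    intro u hu; rw [φ_neg]; have := hφY_nonneg_S u (h2 u hu); linarith
  set p0 : M n → Prop := fun u => φ (-Y) u = 0 with hp0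
  have h00 : (fun u => φ (-Y) u = 0 + 0) = p0 := by
    funext u; rw [hp0]; norm_num
  have hA2 : cut p0 (f * f) = cut p0 f * cut p0 f := by
    have := mul_cut_top (φ (-Y)) f f 0 0 hfb hfb
    rw [h00] at this
    exact this
  have hA3 : cut p0 (f * (f * f)) = cut p0 f * cut p0 (f * f) := by
    have := mul_cut_top (φ (-Y)) f (f * f) 0 0 hfb hffb
    rw [h00] at this
    exact this
  set f0 : AddMonoidAlgebra k (M n) := cut p0 f with hf0
  have hp0m : p0 m := by rw [hp0]; show φ (-Y) m = 0; rw [φ_neg, hYm, neg_zero]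
  have hm0 : m ∈ f0.coeff.support := by
    rw [hf0]
    exact (mem_cut_support_iff p0 f m).mpr ⟨hm, hp0m⟩
  have hf0ne : f0 ≠ 0 := by
    intro h; rw [h] at hm0; simp at hm0
  have hUS : ∀ u, u ∈ S → φ Y u = 0 → u ∈ U := by
    intro u huS h0
    obtain ⟨c, hc⟩ := (he u).mp huS
    have hsum0 : ∑ i, (c i:ℚ) * φ Y (e i) = 0 := by
      rw [← φ_sum, ← hc, h0]
    have hterm : ∀ i ∈ Finset.univ, 0 ≤ (c i:ℚ) * φ Y (e i) :=
      fun i _ => mul_nonneg (by positivity) (hYe i)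
    have hz : ∀ i, c i ≠ 0 → φ Y (e i) = 0 := by
      intro i hci
      have h0i : (c i:ℚ) * φ Y (e i) = 0 :=
        (Finset.sum_eq_zero_iff_of_nonneg hterm).mp hsum0 i (Finset.mem_univ i)
      rcases mul_eq_zero.mp h0i with h | h
      · exact absurd (by exact_mod_cast h) hci
      · exact h
    rw [hc]
    apply AddSubgroup.sum_mem
    intro i _
    by_cases hci : c i = 0
    · rw [hci, zero_smul]
      exact U.zero_mem
    · exact AddSubgroup.nsmul_mem U (AddSubgroup.subset_closure ⟨i, hz i hci, rfl⟩) _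
  have hsupp2U : ∀ u ∈ (f0 * f0).coeff.support, u ∈ U := by
    intro u hu
    rw [hf0, ← hA2] at hu
    obtain ⟨hu1, hu2⟩ := mem_cut_support hu
    refine hUS u (h2 u hu1) ?_
    rw [hp0] at hu2; rw [φ_neg] at hu2; linarith [hu2]
  have hsupp3U : ∀ u ∈ (f0 * (f0 * f0)).coeff.support, u ∈ U := by
    intro u hu
    rw [hf0, ← hA2, ← hA3] at hu
    obtain ⟨hu1, hu2⟩ := mem_cut_support hu
    refine hUS u (h3 u hu1) ?_
    rw [hp0] at hu2; rw [φ_neg] at hu2; linarith [hu2]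
  have hmU : m ∈ U := by
    by_contra hmU
    have key3 := mul_cut_coset U m f0 (f0 * f0) hsupp2U
    have hL : cut (fun u => u - m ∈ U) (f0 * (f0 * f0)) = 0 := by
      apply cut_eq_zero
      intro u hu hcon
      apply hmU
      have hrw : m = u - (u - m) := by abel
      rw [hrw]
      exact U.sub_mem (hsupp3U u hu) hcon
    rw [hL] at key3
    have hR1 : cut (fun u => u - m ∈ U) f0 ≠ 0 := by
      intro hcon
      have happ := cut_apply (fun u => u - m ∈ U) f0 m
      rw [hcon] at happ
      have hmem : m - m ∈ U := by rw [sub_self]; exact U.zero_mem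
      simp only [AddMonoidAlgebra.coeff_zero, Finsupp.coe_zero, Pi.zero_apply, hmem, if_true] at happ
      exact (Finsupp.mem_support_iff.mp hm0) happ.symm
    exact (mul_ne_zero hR1 (mul_ne_zero hf0ne hf0ne)) key3.symm
  -- Step 4 : conclude m ∈ S
  have hrep : ∃ ca cb : Fin r → ℕ, (∀ i, ca i ≠ 0 → φ Y (e i) = 0) ∧
      (∀ i, cb i ≠ 0 → φ Y (e i) = 0) ∧
      m = (∑ i, ca i • e i) - (∑ i, cb i • e i) := by
    clear hm0 hf0ne hm hmC hp0m
    refine AddSubgroup.closure_induction ?_ ?_ ?_ ?_ hmU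
    · rintro x ⟨i, hi, rfl⟩
      refine ⟨fun j => if j = i then 1 else 0, 0, ?_, by simp, ?_⟩
      · intro j hj
        by_cases h : j = i
        · rw [h]; exact hi
        · simp [h] at hj
      · have hterm : ∀ j : Fin r, (if j = i then (1:ℕ) else 0) • e j
            = if j = i then e j else 0 := by
          intro j; by_cases h : j = i <;> simp [h]
        rw [Finset.sum_congr rfl (fun j _ => hterm j), Finset.sum_ite_eq' Finset.univ i e]
        simp
    · exact ⟨0, 0, by simp, by simp, by simp⟩
    · rintro x y' - - ⟨ca, cb, hca, hcb, hx⟩ ⟨ca', cb', hca', hcb', hx'⟩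
      refine ⟨ca + ca', cb + cb', ?_, ?_, ?_⟩
      · intro i hi
        have hor : ca i ≠ 0 ∨ ca' i ≠ 0 := by
          by_contra h
          push_neg at h
          exact hi (by simp [Pi.add_apply, h.1, h.2])
        rcases hor with h | h
        · exact hca i h
        · exact hca' i h
      · intro i hi
        have hor : cb i ≠ 0 ∨ cb' i ≠ 0 := by
          by_contra h
          push_neg at h
          exact hi (by simp [Pi.add_apply, h.1, h.2])
        rcases hor with h | h
        · exact hcb i h
        · exact hcb' i h
      · rw [hx, hx']
        have hsa : ∑ i, (ca + ca') i • e i = (∑ i, ca i • e i) + (∑ i, ca' i • e i) := by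
          rw [← Finset.sum_add_distrib]
          exact Finset.sum_congr rfl fun i _ => by rw [Pi.add_apply, add_nsmul]
        have hsb : ∑ i, (cb + cb') i • e i = (∑ i, cb i • e i) + (∑ i, cb' i • e i) := by
          rw [← Finset.sum_add_distrib]
          exact Finset.sum_congr rfl fun i _ => by rw [Pi.add_apply, add_nsmul]
        rw [hsa, hsb]
        abel
    · rintro x - ⟨ca, cb, hca, hcb, hx⟩
      exact ⟨cb, ca, hcb, hca, by rw [hx]; abel⟩
  obtain ⟨ca, cb, hcaz, hcbz, hmab⟩ := hrep
  set a : M n := ∑ i, ca i • e i with hadef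
  set b : M n := ∑ i, cb i • e i with hbdef
  have haS : a ∈ S := (he a).mpr ⟨ca, hadef⟩
  have hbS : b ∈ S := (he b).mpr ⟨cb, hbdef⟩
  have hrel' : ∀ i, ∃ (t : ℕ) (c : Fin r → ℕ),
      cb i ≠ 0 → t • m = (∑ j, c j • e j) + e i := by
    intro i
    by_cases hci : cb i = 0
    · exact ⟨0, 0, fun h => absurd hci h⟩
    · obtain ⟨t, c, htc⟩ := hYP i (hcbz i hci)
      exact ⟨t, c, fun _ => htc⟩
  choose tt cc hrel using hrel'
  set q : ℕ := ∑ i, cb i * tt i with hq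
  set sB : M n := ∑ i, cb i • (∑ j, cc i j • e j) with hsBdef
  have hsBS : sB ∈ S := by
    rw [hsBdef]
    apply AddSubmonoid.sum_mem
    intro i _
    apply AddSubmonoid.nsmul_mem
    apply AddSubmonoid.sum_mem
    intro j _
    exact AddSubmonoid.nsmul_mem S (he_e j) _
  have hqm : q • m = sB + b := by
    rw [hq, hsBdef, hbdef, Finset.sum_smul, ← Finset.sum_add_distrib]
    apply Finset.sum_congr rfl
    intro i _
    by_cases hci : cb i = 0
    · simp [hci]
    · rw [mul_smul, hrel i hci, smul_add]
  by_cases hq0 : q = 0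
  · have h0 : (0 : M n) = sB + b := by
      rw [← hqm, hq0, zero_smul]
    have hsb : sB = -b := eq_neg_of_add_eq_zero_left h0.symm
    have : m = a + sB := by
      rw [hmab, hsb]
      abel
    rw [this]
    exact S.add_mem haS hsBS
  · have hq1 : 1 ≤ q := Nat.one_le_iff_ne_zero.mpr hq0
    have claim0 : ∀ N : ℕ, q • b + N • m ∈ S := by
      intro N
      induction N using Nat.strong_induction_on with
      | _ N ih =>
        by_cases hN : N < q
        · have hw' : q = N + (q - N) := (Nat.add_sub_cancel' (le_of_lt hN)).symm
          have hid : q • b + N • m = N • a + (q - N) • b := by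
            rw [hmab, nsmul_sub]
            conv_lhs => rw [hw']
            rw [add_nsmul]
            abel
          rw [hid]
          exact S.add_mem (AddSubmonoid.nsmul_mem S haS N) (AddSubmonoid.nsmul_mem S hbS _)
        · push_neg at hN
          have hNpos : 0 < N := lt_of_lt_of_le hq1 hN
          have hNq : N - q < N := Nat.sub_lt hNpos hq1
          have hid : q • b + N • m = ((q • b + (N - q) • m) + sB) + b := by
            have hNm : N • m = (N - q) • m + (sB + b) := by
              conv_lhs => rw [show N = (N - q) + q from (Nat.sub_add_cancel hN).symm]
              rw [add_nsmul, hqm]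
            rw [hNm]
            abel
          rw [hid]
          exact S.add_mem (S.add_mem (ih (N - q) hNq) hsBS) hbS
    have claim1 : ∀ N : ℕ, q * q ≤ N → N • m ∈ S := by
      intro N hN
      have hid : N • m = (q • b + (N - q * q) • m) + q • sB := by
        have hNm : N • m = (N - q * q) • m + (q • sB + q • b) := by
          conv_lhs => rw [show N = (N - q * q) + q * q from (Nat.sub_add_cancel hN).symm]
          rw [add_nsmul]
          congr 1
          rw [← smul_smul, hqm, smul_add]
        rw [hNm]
        abel
      rw [hid]
      exact S.add_mem (claim0 _) (AddSubmonoid.nsmul_mem S hsBS q)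
    have claim2 : ∀ (i N : ℕ), 0 < N → q * q ≤ 2 ^ i * N → N • m ∈ S := by
      intro i
      induction i with
      | zero =>
        intro N hN h
        exact claim1 N (by simpa using h)
      | succ i ih =>
        intro N hN h
        have hpow : (2:ℕ) ^ (i+1) * N = 2 ^ i * (2 * N) := by ring
        have h2m : (2:ℕ) • (N • m) ∈ S := by
          rw [smul_smul]
          exact ih (2 * N) (by positivity) (by rw [← hpow]; exact h)
        have h3m : (3:ℕ) • (N • m) ∈ S := by
          rw [smul_smul]
          apply ih (3 * N) (by positivity)
          calc q * q ≤ 2 ^ (i+1) * N := h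
            _ = 2 ^ i * (2 * N) := hpow
            _ ≤ 2 ^ i * (3 * N) := by
                apply Nat.mul_le_mul_left
                omega
        exact hss (N • m) h2m h3m
    have hfin : (1:ℕ) • m ∈ S := by
      apply claim2 (q * q) 1 one_pos
      rw [mul_one]
      exact le_of_lt (Nat.lt_two_pow_self (n := q * q))
    simpa using hfin

end Alg

end SemiSatAux

/-- Let `k` be an algebraically closed field, `M = ℤ^n` and `S ⊆ M` a finitely
generated submonoid generating `M` as a group.  Then the subalgebra
`k[S] = {f ∈ k[M] | supp f ⊆ S}` is seminormal in the group algebra `k[M]`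
if and only if `S` is semisaturated in `M`. -/
theorem monoidAlgebra_seminormal_iff_semisaturated
    (k : Type*) [Field k] [IsAlgClosed k] (n : ℕ) (hn : 1 ≤ n)
    (S : AddSubmonoid (Fin n → ℤ))
    (hfg : ∃ F : Finset (Fin n → ℤ), AddSubmonoid.closure (F : Set (Fin n → ℤ)) = S)
    (hgen : AddSubgroup.closure (S : Set (Fin n → ℤ)) = ⊤)
    (A : Set (AddMonoidAlgebra k (Fin n → ℤ)))
    (hA : A = {f : AddMonoidAlgebra k (Fin n → ℤ) |
      (f.coeff.support : Set (Fin n → ℤ)) ⊆ (S : Set (Fin n → ℤ))}) :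
    (∀ f : AddMonoidAlgebra k (Fin n → ℤ), f ^ 2 ∈ A → f ^ 3 ∈ A → f ∈ A) ↔
    (∀ m : Fin n → ℤ, 2 • m ∈ S → 3 • m ∈ S → m ∈ S) := by
  classical
  subst hA
  constructor
  · -- seminormal ⇒ semisaturated
    intro hsn m h2m h3m
    set f : AddMonoidAlgebra k (Fin n → ℤ) := AddMonoidAlgebra.single m 1 with hf
    have hf2 : f ^ 2 = AddMonoidAlgebra.single (2 • m) (1:k) := by
      rw [pow_two, hf, AddMonoidAlgebra.single_mul_single, one_mul, two_nsmul]
    have hf3 : f ^ 3 = AddMonoidAlgebra.single (3 • m) (1:k) := by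
      rw [pow_succ, hf2, hf, AddMonoidAlgebra.single_mul_single, one_mul]
      congr 1
      ext j
      simp [Pi.smul_apply]
      ring
    have hmem : f ∈ {f : AddMonoidAlgebra k (Fin n → ℤ) |
        (f.coeff.support : Set (Fin n → ℤ)) ⊆ (S : Set (Fin n → ℤ))} := by
      apply hsn
      · rw [hf2]
        intro u hu
        rw [Finset.mem_coe, AddMonoidAlgebra.coeff_single, Finsupp.support_single_ne_zero _ (one_ne_zero)] at hu
        rw [Finset.mem_singleton] at hu
        subst hu
        exact h2m
      · rw [hf3]
        intro u hu
        rw [Finset.mem_coe, AddMonoidAlgebra.coeff_single, Finsupp.support_single_ne_zero _ (one_ne_zero)] at hu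
        rw [Finset.mem_singleton] at hu
        subst hu
        exact h3m
    have : m ∈ f.coeff.support := by
      rw [hf, AddMonoidAlgebra.coeff_single, Finsupp.support_single_ne_zero _ (one_ne_zero)]
      exact Finset.mem_singleton_self m
    exact hmem (Finset.mem_coe.mpr this)
  · -- semisaturated ⇒ seminormal
    intro hss f h2A h3A
    obtain ⟨F, hF⟩ := hfg
    set r : ℕ := F.card with hr
    set e : Fin r → (Fin n → ℤ) := fun i => (F.equivFin.symm i : Fin n → ℤ) with he_def
    have hrange : Set.range e = (F : Set (Fin n → ℤ)) := by
      ext x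
      constructor
      · rintro ⟨i, rfl⟩
        exact (F.equivFin.symm i).2
      · intro hx
        exact ⟨F.equivFin ⟨x, hx⟩, by rw [he_def]; simp⟩
    have he : ∀ x : Fin n → ℤ, x ∈ S ↔ ∃ c : Fin r → ℕ, x = ∑ i, c i • e i := by
      intro x
      constructor
      · intro hx
        rw [← hF] at hx
        refine AddSubmonoid.closure_induction ?_ ?_ ?_ hx
        · intro z hz
          rw [← hrange] at hz
          obtain ⟨i, rfl⟩ := hz
          refine ⟨fun j => if j = i then 1 else 0, ?_⟩
          have hterm : ∀ j : Fin r, (if j = i then (1:ℕ) else 0) • e j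
              = if j = i then e j else 0 := by
            intro j; by_cases h : j = i <;> simp [h]
          rw [Finset.sum_congr rfl (fun j _ => hterm j),
            Finset.sum_ite_eq' Finset.univ i e]
          simp
        · exact ⟨0, by simp⟩
        · rintro z z' - - ⟨c, hc⟩ ⟨c', hc'⟩
          refine ⟨c + c', ?_⟩
          rw [hc, hc', ← Finset.sum_add_distrib]
          exact Finset.sum_congr rfl fun i _ => by rw [Pi.add_apply, add_nsmul]
      · rintro ⟨c, rfl⟩
        apply AddSubmonoid.sum_mem
        intro i _
        apply AddSubmonoid.nsmul_mem
        rw [← hF]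
        apply AddSubmonoid.subset_closure
        rw [← hrange]
        exact ⟨i, rfl⟩
    have h2 : ∀ u ∈ (f * f).coeff.support, u ∈ S := by
      intro u hu
      apply h2A
      rw [Finset.mem_coe, pow_two]
      exact hu
    have h3 : ∀ u ∈ (f * (f * f)).coeff.support, u ∈ S := by
      intro u hu
      apply h3A
      rw [Finset.mem_coe, show f ^ 3 = f * (f * f) by ring]
      exact hu
    intro u hu
    exact SemiSatAux.support_subset_of_semisaturated S e he hss f h2 h3 u hu
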